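/- Let σ : ℝ → ℝ satisfy the Weakened Intermediate Value Property, let w ∈ ℝ^n, and let P be a partitioning of {1,…,n} into k blocks. Then there exists a vector w' ∈ R(w, P) such that σ applied componentwise to w' equals the mean representative ⟨σ(w)⟩_P of the componentwise image σ(w) under P. -/

import Mathlib

noncomputable section

/-- A partitioning of `{1,…,n}` (modeled as `Fin n`) into `k` blocks:
nonempty, pairwise disjoint subsets whose union is everything. -/
def IsPartition {n k : ℕ} (P : Fin k → Finset (Fin n)) : Prop :=
  (∀ j, (P j).Nonempty) ∧
  (∀ j₁ j₂, j₁ ≠ j₂ → Disjoint (P j₁) (P j₂)) ∧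
  (∀ i : Fin n, ∃ j, i ∈ P j)

/-- A partition combination matrix (PCM) for a partitioning `P`:
nonnegative entries, each column sums to 1, and `C i j = 0` whenever `i ∉ P j`. -/
def IsPCM {n k : ℕ} (P : Fin k → Finset (Fin n)) (C : Matrix (Fin n) (Fin k) ℝ) : Prop :=
  (∀ i j, 0 ≤ C i j) ∧ (∀ j, ∑ i, C i j = 1) ∧ (∀ i j, i ∉ P j → C i j = 0)

/-- A binary PCM: a PCM all of whose entries are `0` or `1`. -/
def IsBinPCM {n k : ℕ} (P : Fin k → Finset (Fin n)) (C : Matrix (Fin n) (Fin k) ℝ) : Prop :=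
  IsPCM P C ∧ ∀ i j, C i j = 0 ∨ C i j = 1

/-- `ScaleCols(M, w)_{i,j} = M_{i,j} * w_j`. -/
def scaleCols {m k : ℕ} (M : Matrix (Fin m) (Fin k) ℝ) (w : Fin k → ℝ) :
    Matrix (Fin m) (Fin k) ℝ :=
  fun i j => M i j * w j

/-- The scaled merging `ScaleCols(Dᵀ M C, (|P^in_1|,…,|P^in_k|))` of `M`
determined by PCMs `C` (for `Pin`) and `D` (for the output partitioning). -/
def scaledMerging {m n k ko : ℕ} (M : Matrix (Fin m) (Fin n) ℝ)
    (Pin : Fin k → Finset (Fin n))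
    (C : Matrix (Fin n) (Fin k) ℝ) (D : Matrix (Fin m) (Fin ko) ℝ) :
    Matrix (Fin ko) (Fin k) ℝ :=
  scaleCols (D.transpose * M * C) (fun j => ((Pin j).card : ℝ))

/-- The mean representative `⟨v⟩_P`, with `j`-th component `(∑_{i ∈ P_j} v_i)/|P_j|`. -/
def meanRep {n k : ℕ} (P : Fin k → Finset (Fin n)) (v : Fin n → ℝ) : Fin k → ℝ :=
  fun j => (∑ i ∈ P j, v i) / ((P j).card : ℝ)

/-- Membership in the convex representative set `R(v, P)`:
`min_{i ∈ P_j} v_i ≤ z_j ≤ max_{i ∈ P_j} v_i` for every block `j`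
(stated existentially, which is equivalent for nonempty blocks). -/
def InRepSet {n k : ℕ} (P : Fin k → Finset (Fin n)) (v : Fin n → ℝ) (z : Fin k → ℝ) : Prop :=
  ∀ j, (∃ i ∈ P j, v i ≤ z j) ∧ (∃ i ∈ P j, z j ≤ v i)

/-- The Weakened Intermediate Value Property: for all `a_0 ≤ ⋯ ≤ a_n` there is
`b ∈ [a_0, a_n]` with `f b` the average of the `f (a_i)`. -/
def WIVP (f : ℝ → ℝ) : Prop :=
  ∀ (n : ℕ) (a : Fin (n + 1) → ℝ), Monotone a →
    ∃ b ∈ Set.Icc (a 0) (a (Fin.last n)), f b = (∑ i, f (a i)) / (n + 1 : ℝ)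


lemma block_lemma (σ : ℝ → ℝ)
    (hσ : ∀ (n : ℕ) (a : Fin (n + 1) → ℝ), Monotone a →
      ∃ b ∈ Set.Icc (a 0) (a (Fin.last n)), σ b = (∑ i, σ (a i)) / (n + 1 : ℝ))
    {N : ℕ} (s : Finset (Fin N)) (hs : s.Nonempty) (w : Fin N → ℝ) :
    ∃ b, (∃ i ∈ s, w i ≤ b) ∧ (∃ i ∈ s, b ≤ w i) ∧
      σ b = (∑ i ∈ s, σ (w i)) / (s.card : ℝ) := by
  classical
  set l : List ℝ := (s.val.map w).sort (· ≤ ·) with hl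
  have hlen : l.length = s.card := by
    simp [hl, Multiset.length_sort]
  have hsorted : l.Pairwise (· ≤ ·) := Multiset.pairwise_sort _ _
  obtain ⟨m, hm⟩ : ∃ m, s.card = m + 1 :=
    ⟨s.card - 1, (Nat.succ_pred_eq_of_pos (Finset.card_pos.mpr hs)).symm⟩
  have hlen' : l.length = m + 1 := hlen.trans hm
  set a : Fin (m + 1) → ℝ := fun i => l.get (Fin.cast hlen'.symm i) with ha
  have hmono : Monotone a := fun i j hij => hsorted.rel_get_of_le (by simpa using hij)
  obtain ⟨b, hb, hfb⟩ := hσ m a hmono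
  have hmem : ∀ i : Fin (m+1), ∃ x ∈ s, w x = a i := by
    intro i
    have h1 : a i ∈ l := List.get_mem l _
    have h2 : a i ∈ (s.val.map w) := by
      rwa [← Multiset.mem_sort (· ≤ ·)]
    obtain ⟨x, hx, hxa⟩ := Multiset.mem_map.mp h2
    exact ⟨x, hx, hxa⟩
  refine ⟨b, ?_, ?_, ?_⟩
  · obtain ⟨x, hx, hxa⟩ := hmem 0
    exact ⟨x, hx, hxa ▸ hb.1⟩
  · obtain ⟨x, hx, hxa⟩ := hmem (Fin.last m)
    exact ⟨x, hx, hxa ▸ hb.2⟩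
  · rw [hfb, hm]
    congr 1
    · have e1 : ∑ i : Fin (m+1), σ (a i) = ∑ i : Fin l.length, σ (l.get i) := by
        rw [← Fin.sum_congr' _ hlen']; rfl
      have e2 : ∑ i : Fin l.length, σ (l.get i) = (l.map σ).sum := by
        rw [← List.sum_ofFn]; congr 1
        apply List.ext_get <;> simp
      have e3 : ((l : Multiset ℝ).map σ).sum = ∑ i ∈ s, σ (w i) := by
        rw [hl, Multiset.sort_eq, Multiset.map_map]
        rfl
      rw [e1, e2, ← e3]; simp
    · push_cast; ring

/-- for `σ` satisfying the WIVP, `w ∈ ℝ^n`, and a partitioning `P`,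
there is `w' ∈ R(w, P)` with `σ(w') = ⟨σ(w)⟩_P` componentwise. -/
theorem exists_repSet_preimage_of_mean {n k : ℕ} (σ : ℝ → ℝ) (hσ : WIVP σ)
    (w : Fin n → ℝ) (P : Fin k → Finset (Fin n)) (hP : IsPartition P) :
    ∃ w' : Fin k → ℝ, InRepSet P w w' ∧
      (fun j => σ (w' j)) = meanRep P (fun i => σ (w i)) := by
  classical
  choose b h1 h2 h3 using fun j => block_lemma σ hσ (P j) (hP.1 j) w
  exact ⟨b, fun j => ⟨h1 j, h2 j⟩, funext fun j => h3 j⟩
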